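/- (Proposition: properties of the reduced susceptance matrix) Let B be the susceptance matrix of a connected weighted graph, partitioned into load and inverter blocks, and let K_I be a diagonal matrix with strictly negative diagonal entries. Then −B_red = −(B_LL − B_LI(B_II+K_I)^{−1}B_IL) is a symmetric M-matrix: it is positive definite and all its off-diagonal entries are nonpositive (equivalently, B_red is negative definite with nonnegative off-diagonal entries). -/

import Mathlib

open Matrix

def suscGraph {V : Type*} (B : Matrix V V ℝ) : SimpleGraph V where
  Adj i j := i ≠ j ∧ 0 < B i j ∧ 0 < B j i
  symm := ⟨fun _ _ h => ⟨h.1.symm, h.2.2, h.2.1⟩⟩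
  loopless := ⟨fun _ h => h.1 rfl⟩

def IsSusceptance {V : Type*} [Fintype V] [DecidableEq V] (B : Matrix V V ℝ) : Prop :=
  B.IsSymm ∧ (∀ i j, i ≠ j → 0 ≤ B i j) ∧
    (∀ i, B i i = -∑ j ∈ Finset.univ.erase i, B i j) ∧ (suscGraph B).Connected

section Aux

variable {V : Type*} [Fintype V] [DecidableEq V]

lemma susc_row_sum {B : Matrix V V ℝ} (hB : IsSusceptance B) (i : V) :
    ∑ j, B i j = 0 := by
  rw [← Finset.add_sum_erase _ _ (Finset.mem_univ i), hB.2.2.1 i]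
  ring

lemma susc_quad {B : Matrix V V ℝ} (hB : IsSusceptance B) (x : V → ℝ) :
    x ⬝ᵥ (-B) *ᵥ x = (1/2) * ∑ i, ∑ j, B i j * (x i - x j)^2 := by
  have hrow : ∀ i, ∑ j, B i j = 0 := susc_row_sum hB
  have hcol : ∀ j, ∑ i, B i j = 0 := by
    intro j
    have : ∑ i, B i j = ∑ i, B j i :=
      Finset.sum_congr rfl fun i _ => hB.1.apply j i ▸ rfl
    rw [this, hrow]
  set S := ∑ i, ∑ j, x i * (B i j * x j) with hS
  have key : ∑ i, ∑ j, B i j * (x i - x j)^2 = -2 * S := by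
    calc ∑ i, ∑ j, B i j * (x i - x j)^2
        = ∑ i, (x i ^ 2 * ∑ j, B i j
            + ∑ j, (x j ^ 2 * B i j - 2 * (x i * (B i j * x j)))) := by
          refine Finset.sum_congr rfl fun i _ => ?_
          rw [Finset.mul_sum, ← Finset.sum_add_distrib]
          exact Finset.sum_congr rfl fun j _ => by ring
      _ = ∑ i, ∑ j, (x j ^ 2 * B i j - 2 * (x i * (B i j * x j))) := by
          simp [hrow]
      _ = ∑ j, ∑ i, (x j ^ 2 * B i j - 2 * (x i * (B i j * x j))) :=
          Finset.sum_comm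
      _ = ∑ j, (x j ^ 2 * ∑ i, B i j - 2 * ∑ i, x i * (B i j * x j)) := by
          refine Finset.sum_congr rfl fun j _ => ?_
          rw [Finset.mul_sum, Finset.mul_sum, ← Finset.sum_sub_distrib]
      _ = ∑ j, (-2) * ∑ i, x i * (B i j * x j) := by
          refine Finset.sum_congr rfl fun j _ => ?_
          rw [hcol]; ring
      _ = -2 * ∑ j, ∑ i, x i * (B i j * x j) := by
          rw [← Finset.mul_sum]
      _ = -2 * S := by rw [hS, Finset.sum_comm]
  have hL : x ⬝ᵥ (-B) *ᵥ x = -S := by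
    have h0 : x ⬝ᵥ (-B) *ᵥ x + S = 0 := by
      rw [hS]
      simp only [dotProduct, mulVec, Matrix.neg_apply, ← Finset.sum_add_distrib]
      refine Finset.sum_eq_zero fun i _ => ?_
      rw [Finset.mul_sum, ← Finset.sum_add_distrib]
      exact Finset.sum_eq_zero fun j _ => by ring
    linarith
  rw [hL, key]; ring

lemma susc_reachable_eq {B : Matrix V V ℝ} {x : V → ℝ}
    (hadj : ∀ p q, (suscGraph B).Adj p q → x p = x q) {p q : V}
    (h : (suscGraph B).Reachable p q) : x p = x q := by
  have hwalk : ∀ {p q : V} (w : (suscGraph B).Walk p q), x p = x q := by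
    intro p q w
    induction w with
    | nil => rfl
    | cons ha _ ih => exact (hadj _ _ ha).trans ih
  exact h.elim fun w => hwalk w

end Aux

/-- `-B_red = -(B_LL - B_LI (B_II + K_I)⁻¹ B_IL)` is a symmetric
M-matrix: positive definite with nonpositive off-diagonal entries (equivalently,
`B_red` is negative definite with nonnegative off-diagonal entries). -/
theorem reduced_susceptance_is_Mmatrix {n m : ℕ} (hn : 0 < n) (hm : 0 < m)
    (B : Matrix (Fin n ⊕ Fin m) (Fin n ⊕ Fin m) ℝ) (hB : IsSusceptance B)
    (k : Fin m → ℝ) (hk : ∀ i, k i < 0)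
    (hinv : IsUnit (B.toBlocks₂₂ + Matrix.diagonal k).det) :
    let Bred := B.toBlocks₁₁ -
      B.toBlocks₁₂ * (B.toBlocks₂₂ + Matrix.diagonal k)⁻¹ * B.toBlocks₂₁
    (-Bred).PosDef ∧ ∀ i j, i ≠ j → (-Bred) i j ≤ 0 := by
  intro Bred
  have hsym : ∀ p q, B p q = B q p := fun p q => hB.1.apply q p
  have hoff : ∀ p q, p ≠ q → 0 ≤ B p q := hB.2.1
  set N : Matrix (Fin m) (Fin m) ℝ := B.toBlocks₂₂ + Matrix.diagonal k with hN
  set D : Matrix (Fin m) (Fin m) ℝ := -N with hD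
  set w : (Fin n ⊕ Fin m) → ℝ := Sum.elim (fun _ => 0) (fun i => -k i) with hw
  set A : Matrix (Fin n ⊕ Fin m) (Fin n ⊕ Fin m) ℝ := -B + Matrix.diagonal w with hA
  -- A as a block matrix
  have hAblocks : A = fromBlocks (-B.toBlocks₁₁) (-B.toBlocks₁₂) (-B.toBlocks₁₂)ᴴ D := by
    ext p q
    cases p with
    | inl i =>
      cases q with
      | inl j => simp [hA, hw, Matrix.diagonal_apply, Matrix.toBlocks₁₁]
      | inr j => simp [hA, hw, Matrix.diagonal_apply, Matrix.toBlocks₁₂]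
    | inr i =>
      cases q with
      | inl j =>
        simp [hA, hw, Matrix.diagonal_apply, Matrix.toBlocks₁₂, hsym (Sum.inr i) (Sum.inl j)]
      | inr j =>
        by_cases hij : i = j <;>
          simp [hA, hD, hN, hw, Matrix.diagonal_apply, Matrix.toBlocks₂₂, hij, add_comm]
  -- quadratic form of A
  have hquad : ∀ x : (Fin n ⊕ Fin m) → ℝ,
      x ⬝ᵥ A *ᵥ x = (1/2) * (∑ i, ∑ j, B i j * (x i - x j)^2)
        + ∑ i : Fin m, (-k i) * x (Sum.inr i)^2 := by
    intro x
    have h1 : x ⬝ᵥ (Matrix.diagonal w) *ᵥ x = ∑ p, w p * x p ^ 2 := by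
      simp only [dotProduct, mulVec_diagonal]
      exact Finset.sum_congr rfl fun p _ => by ring
    have h2 : ∑ p, w p * x p ^ 2 = ∑ i : Fin m, (-k i) * x (Sum.inr i)^2 := by
      rw [Fintype.sum_sum_type]
      simp [hw]
    rw [hA, add_mulVec, dotProduct_add, susc_quad hB, h1, h2]
  have hqe : ∀ x : (Fin n ⊕ Fin m) → ℝ, ∀ i j,
      0 ≤ B i j * (x i - x j)^2 := by
    intro x i j
    by_cases hij : i = j
    · simp [hij]
    · exact mul_nonneg (hoff i j hij) (sq_nonneg _)
  -- A is positive definite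
  have hApd : A.PosDef := by
    refine Matrix.PosDef.of_dotProduct_mulVec_pos ?_ ?_
    · rw [hA]
      have : (-B + Matrix.diagonal w)ᴴ = -B + Matrix.diagonal w := by
        ext p q
        simp only [Matrix.conjTranspose_apply, Matrix.add_apply, Matrix.neg_apply,
          Matrix.diagonal_apply, star_trivial]
        by_cases h : p = q
        · subst h; rfl
        · rw [if_neg (Ne.symm h), if_neg h, hsym p q]
      exact this
    · intro x hx
      rw [show (star x) = x from star_trivial x, hquad x]
      have hq1 : 0 ≤ ∑ i, ∑ j, B i j * (x i - x j)^2 :=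
        Finset.sum_nonneg fun i _ => Finset.sum_nonneg fun j _ => hqe x i j
      have hq2nn : ∀ i ∈ Finset.univ, (0:ℝ) ≤ (-k i) * x (Sum.inr i)^2 :=
        fun i _ => mul_nonneg (by linarith [hk i]) (sq_nonneg _)
      have hq2 : 0 ≤ ∑ i : Fin m, (-k i) * x (Sum.inr i)^2 :=
        Finset.sum_nonneg hq2nn
      rcases lt_or_eq_of_le hq2 with h2 | h2
      · positivity
      rcases lt_or_eq_of_le hq1 with h1 | h1
      · positivity
      -- both zero: derive contradiction
      exfalso
      have hxr : ∀ i : Fin m, x (Sum.inr i) = 0 := by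
        intro i
        have := (Finset.sum_eq_zero_iff_of_nonneg hq2nn).mp h2.symm i (Finset.mem_univ i)
        have hki : -k i ≠ 0 := by linarith [hk i]
        have := (mul_eq_zero.mp this).resolve_left hki
        exact sq_eq_zero_iff.mp this
      have hterms : ∀ i j, B i j * (x i - x j)^2 = 0 := by
        intro i j
        have houter := (Finset.sum_eq_zero_iff_of_nonneg
          (fun i _ => Finset.sum_nonneg fun j _ => hqe x i j)).mp h1.symm i (Finset.mem_univ i)
        exact (Finset.sum_eq_zero_iff_of_nonneg
          (fun j _ => hqe x i j)).mp houter j (Finset.mem_univ j)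
      have hadj : ∀ p q, (suscGraph B).Adj p q → x p = x q := by
        intro p q hpq
        have hBpq : B p q ≠ 0 := ne_of_gt hpq.2.1
        have := (mul_eq_zero.mp (hterms p q)).resolve_left hBpq
        have := sq_eq_zero_iff.mp this
        linarith [this]
      have hconst : ∀ p q : Fin n ⊕ Fin m, x p = x q := fun p q =>
        susc_reachable_eq hadj (hB.2.2.2.preconnected p q)
      apply hx
      funext p
      rw [hconst p (Sum.inr ⟨0, hm⟩), hxr]
      rfl
  -- D is positive definite
  have hDpd : D.PosDef := by
    refine Matrix.PosDef.of_dotProduct_mulVec_pos ?_ ?_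
    · have := hApd.1
      rw [hAblocks] at this
      have h22 := congrArg Matrix.toBlocks₂₂ this
      have h22' : (fun i j => D j i) = fun i j => D i j := by
        simpa [Matrix.toBlocks₂₂, Matrix.fromBlocks, Matrix.conjTranspose_apply]
          using h22
      simpa using Matrix.IsSymm.ext fun i j => congrFun (congrFun h22' i) j
    · intro y hy
      have hz : (Sum.elim (0 : Fin n → ℝ) y) ≠ 0 := by
        intro h
        apply hy
        funext i
        exact congrFun h (Sum.inr i)
      have := hApd.dotProduct_mulVec_pos hz
      rw [show star (Sum.elim (0 : Fin n → ℝ) y) = Sum.elim (0 : Fin n → ℝ) y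
        from star_trivial _] at this
      rw [show (star y) = y from star_trivial y]
      calc (0:ℝ) < (Sum.elim (0 : Fin n → ℝ) y) ⬝ᵥ A *ᵥ (Sum.elim (0 : Fin n → ℝ) y) := this
        _ = y ⬝ᵥ D *ᵥ y := by
            rw [hAblocks, fromBlocks_mulVec]
            simp [dotProduct, Fintype.sum_sum_type]
  have hDdet : IsUnit D.det := isUnit_iff_ne_zero.mpr hDpd.det_pos.ne'
  have : Invertible D := D.invertibleOfIsUnitDet hDdet
  -- inverse relation
  have hNinv : N⁻¹ = -(D⁻¹) := by
    apply Matrix.inv_eq_right_inv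
    rw [Matrix.mul_neg, ← Matrix.neg_mul, ← hD, Matrix.mul_nonsing_inv _ hDdet]
  -- Schur complement equals -Bred
  have hSchur : (-B.toBlocks₁₁) - (-B.toBlocks₁₂) * D⁻¹ * (-B.toBlocks₁₂)ᴴ = -Bred := by
    have hB21 : (-B.toBlocks₁₂)ᴴ = -B.toBlocks₂₁ := by
      ext i j
      simp [Matrix.conjTranspose_apply, Matrix.toBlocks₁₂, Matrix.toBlocks₂₁,
        hsym (Sum.inl j) (Sum.inr i)]
    have hDinv : D⁻¹ = -(N⁻¹) := by rw [hNinv, neg_neg]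
    rw [hB21, hDinv]
    simp only [Bred, neg_sub, Matrix.mul_neg, Matrix.neg_mul, neg_neg]
    abel
  -- positive definiteness of -Bred
  have hpd : (-Bred).PosDef := by
    rw [← hSchur]
    refine Matrix.PosDef.of_dotProduct_mulVec_pos ?_ ?_
    · exact ((Matrix.IsHermitian.fromBlocks₂₂ _ _ hDpd.1).mp (hAblocks ▸ hApd.1))
    · intro x hx
      classical
      set y : Fin m → ℝ := -((D⁻¹ * (-B.toBlocks₁₂)ᴴ) *ᵥ x) with hy
      have hz : Sum.elim x y ≠ 0 := by
        intro h
        apply hx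
        funext i
        exact congrFun h (Sum.inl i)
      have hA2 := hApd.dotProduct_mulVec_pos hz
      rw [show star (Sum.elim x y) = Sum.elim x y from star_trivial _,
        dotProduct_mulVec, hAblocks] at hA2
      have heq := Matrix.schur_complement_eq₂₂ (-B.toBlocks₁₁) (-B.toBlocks₁₂)
        (x := x) (y := y) hDpd.1
      rw [show star (Sum.elim x y) = Sum.elim x y from star_trivial _,
        show star x = x from star_trivial x,
        show star ((D⁻¹ * (-B.toBlocks₁₂)ᴴ) *ᵥ x + y)
          = (D⁻¹ * (-B.toBlocks₁₂)ᴴ) *ᵥ x + y from star_trivial _] at heq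
      rw [heq, hy, add_neg_cancel] at hA2
      simpa [dotProduct_mulVec, show star x = x from star_trivial x] using hA2
  refine ⟨hpd, ?_⟩
  -- nonpositive off-diagonal entries
  have hDoff : ∀ i j, i ≠ j → D i j ≤ 0 := by
    intro i j hij
    have : D i j = -(B (Sum.inr i) (Sum.inr j)) := by
      simp [hD, hN, Matrix.toBlocks₂₂, Matrix.diagonal_apply, hij]
    rw [this]
    simpa using hoff (Sum.inr i) (Sum.inr j) (by simp [hij])
  have hDrow : ∀ i, 0 < ∑ j, D i j := by
    intro i
    have htot : ∑ p, B (Sum.inr i) p = 0 := susc_row_sum hB (Sum.inr i)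
    rw [Fintype.sum_sum_type] at htot
    have hLn : 0 ≤ ∑ j : Fin n, B (Sum.inr i) (Sum.inl j) :=
      Finset.sum_nonneg fun j _ => hoff _ _ (by simp)
    have hsumD : ∑ j, D i j
        = -∑ j : Fin m, B (Sum.inr i) (Sum.inr j) - k i := by
      simp [hD, hN, Matrix.toBlocks₂₂, Finset.sum_add_distrib, Matrix.diagonal_apply,
        Finset.sum_ite_eq, Finset.sum_neg_distrib] <;> ring
    rw [hsumD]
    have := hk i
    linarith
  have hDinvnn : ∀ a b, 0 ≤ D⁻¹ a b := by
    intro a b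
    by_contra hneg
    push_neg at hneg
    set c : Fin m → ℝ := fun p => D⁻¹ p b with hc
    obtain ⟨i, -, hmin⟩ := Finset.exists_min_image Finset.univ c ⟨a, Finset.mem_univ a⟩
    have hci : c i < 0 := lt_of_le_of_lt (hmin a (Finset.mem_univ a)) hneg
    have hDc : 0 ≤ (D *ᵥ c) i := by
      have : (D *ᵥ c) i = (D * D⁻¹) i b := by
        simp [mulVec, Matrix.mul_apply, hc, dotProduct]
      rw [this, Matrix.mul_nonsing_inv _ hDdet]
      by_cases hib : i = b <;> simp [Matrix.one_apply, hib]
    have hle : (D *ᵥ c) i ≤ (∑ j, D i j) * c i := by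
      simp only [mulVec, dotProduct]
      rw [Finset.sum_mul]
      refine Finset.sum_le_sum fun j _ => ?_
      by_cases hij : i = j
      · subst hij; rfl
      · exact mul_le_mul_of_nonpos_left (hmin j (Finset.mem_univ j))
          (hDoff i j hij)
    have : (∑ j, D i j) * c i < 0 := mul_neg_of_pos_of_neg (hDrow i) hci
    linarith
  have hNinvnp : ∀ a b, N⁻¹ a b ≤ 0 := by
    intro a b
    rw [hNinv]
    simpa using hDinvnn a b
  intro i j hij
  have h11 : 0 ≤ B.toBlocks₁₁ i j := hoff _ _ (by simp [hij])
  have hprod : (B.toBlocks₁₂ * N⁻¹ * B.toBlocks₂₁) i j ≤ 0 := by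
    rw [Matrix.mul_apply]
    refine Finset.sum_nonpos fun b _ => ?_
    refine mul_nonpos_of_nonpos_of_nonneg ?_ (hoff _ _ (by simp))
    rw [Matrix.mul_apply]
    refine Finset.sum_nonpos fun a _ => ?_
    exact mul_nonpos_of_nonneg_of_nonpos (hoff _ _ (by simp)) (hNinvnp a b)
  have : (-Bred) i j = -(B.toBlocks₁₁ i j) + (B.toBlocks₁₂ * N⁻¹ * B.toBlocks₂₁) i j := by
    simp only [Bred, Matrix.sub_apply, Matrix.neg_apply, ← hN]
    ring
  rw [this]
  linarith
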